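/- Let X = {x_1 > x_2 > ⋯ > x_m ≥ 0} be real numbers and α = (α_1,…,α_r) a δ-deviation set of size m with partial sums c_0 = 0, c_k = α_1 + ⋯ + α_k. Then the alternating block sum Δ(X,α) = |Σ_{k≥0} (−1)^k Σ_{c_k < i ≤ c_{k+1}} x_i| satisfies Δ(X,α) ≤ δ·x_1. -/

import Mathlib

/-- `α` is a `δ`-deviation set of size `m`: a finite sequence of positive integers
summing to `m`, whose total alternating sum has absolute value at most `1`,
and all of whose partial alternating sums have absolute value at most `δ`. -/
def IsDevSet (m δ : ℕ) (α : List ℕ) : Prop :=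
  (∀ a ∈ α, 0 < a) ∧ α.sum = m ∧
  |∑ i ∈ Finset.range α.length, (-1 : ℤ) ^ i * (α.getD i 0 : ℤ)| ≤ 1 ∧
  ∀ k : ℕ, |∑ i ∈ Finset.range k, (-1 : ℤ) ^ i * (α.getD i 0 : ℤ)| ≤ (δ : ℤ)

/-- `zeta m δ` is the number of `δ`-deviation sets of size `m`. -/
noncomputable def zeta (m δ : ℕ) : ℕ := Nat.card {α : List ℕ // IsDevSet m δ α}

namespace DevAux

/-- Partial sums of the block lengths. -/
def c (α : List ℕ) (k : ℕ) : ℕ := (α.take k).sum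

/-- Index of the block containing `i`. -/
def blk (α : List ℕ) (i : ℕ) : ℕ :=
  ((Finset.range α.length).filter (fun k => c α (k + 1) ≤ i)).card

/-- Alternating partial sums of `α`. -/
def A (α : List ℕ) (k : ℕ) : ℤ :=
  ∑ i ∈ Finset.range k, (-1 : ℤ) ^ i * (α.getD i 0 : ℤ)

/-- Partial sums of the sign sequence. -/
def S (α : List ℕ) (n : ℕ) : ℤ :=
  ∑ i ∈ Finset.range n, (-1 : ℤ) ^ (blk α i)

lemma c_mono (α : List ℕ) : Monotone (c α) := by
  apply monotone_nat_of_le_succ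
  intro k
  unfold c
  by_cases h : k < α.length
  · rw [List.sum_take_succ _ _ h]; omega
  · rw [List.take_of_length_le (by omega), List.take_of_length_le (by omega)]

lemma c_succ (α : List ℕ) {k : ℕ} (hk : k < α.length) :
    c α (k + 1) = c α k + α.getD k 0 := by
  unfold c
  rw [List.sum_take_succ _ _ hk, List.getD_eq_getElem _ _ hk]

lemma blk_eq (α : List ℕ) {k i : ℕ} (hk : k < α.length)
    (h1 : c α k ≤ i) (h2 : i < c α (k + 1)) : blk α i = k := by
  unfold blk
  have hfil : (Finset.range α.length).filter (fun j => c α (j + 1) ≤ i)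
      = Finset.range k := by
    ext j
    simp only [Finset.mem_filter, Finset.mem_range]
    constructor
    · rintro ⟨hj, hle⟩
      by_contra h
      push_neg at h
      exact absurd (le_trans (c_mono α (by omega : k + 1 ≤ j + 1)) hle) (not_le.2 h2)
    · intro hj
      exact ⟨by omega, le_trans (c_mono α (by omega : j + 1 ≤ k)) h1⟩
  rw [hfil, Finset.card_range]

lemma S_split (α : List ℕ) {a b : ℕ} (h : a ≤ b) :
    S α b = S α a + ∑ i ∈ Finset.Ico a b, (-1 : ℤ) ^ (blk α i) := by
  unfold S
  rw [Finset.range_eq_Ico, Finset.range_eq_Ico]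
  exact (Finset.sum_Ico_consecutive (fun i => (-1 : ℤ) ^ (blk α i)) (Nat.zero_le a) h).symm

lemma S_c (α : List ℕ) : ∀ k, k ≤ α.length → S α (c α k) = A α k := by
  intro k
  induction k with
  | zero => intro _; simp [S, A, c]
  | succ k ih =>
    intro hk
    have hk' : k < α.length := by omega
    rw [S_split α (c_mono α (Nat.le_succ k)), ih (by omega)]
    have hsum : ∑ i ∈ Finset.Ico (c α k) (c α (k + 1)), (-1 : ℤ) ^ (blk α i)
        = (-1 : ℤ) ^ k * (α.getD k 0 : ℤ) := by
      have hc : ∑ i ∈ Finset.Ico (c α k) (c α (k + 1)), (-1 : ℤ) ^ (blk α i)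
          = ∑ _i ∈ Finset.Ico (c α k) (c α (k + 1)), (-1 : ℤ) ^ k :=
        Finset.sum_congr rfl (fun i hi => by
          rw [Finset.mem_Ico] at hi
          rw [blk_eq α hk' hi.1 hi.2])
      rw [hc, Finset.sum_const, Nat.card_Ico, c_succ α hk']
      have h2 : c α k + α.getD k 0 - c α k = α.getD k 0 := by omega
      rw [h2, nsmul_eq_mul]
      ring
    rw [hsum]
    unfold A
    rw [Finset.sum_range_succ]

lemma exists_block (α : List ℕ) {n : ℕ} (hL : 1 ≤ α.length) (hn : n < c α α.length) :
    ∃ k < α.length, c α k ≤ n ∧ n < c α (k + 1) := by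
  have hex : ∃ j, n < c α (j + 1) := ⟨α.length - 1, by
    have : α.length - 1 + 1 = α.length := by omega
    rw [this]; exact hn⟩
  classical
  let k := Nat.find hex
  have hk2 : n < c α (k + 1) := Nat.find_spec hex
  have hk1 : c α k ≤ n := by
    rcases Nat.eq_zero_or_pos k with h0 | h0
    · simp [h0, c]
    · have := Nat.find_min hex (m := k - 1) (by omega)
      push_neg at this
      have : c α (k - 1 + 1) ≤ n := this
      rwa [(by omega : k - 1 + 1 = k)] at this
  refine ⟨k, ?_, hk1, hk2⟩
  by_contra h
  push_neg at h
  exact absurd (le_trans (c_mono α (by omega : α.length ≤ k)) hk1) (not_le.2 hn)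

lemma S_bound (m δ : ℕ) (α : List ℕ) (hα : IsDevSet m δ α) (hm : 1 ≤ m) :
    ∀ n, n ≤ m → |S α n| ≤ (δ : ℤ) := by
  obtain ⟨hpos, hsum, _, hpart⟩ := hα
  have hcL : c α α.length = m := by
    unfold c; rw [List.take_of_length_le (le_refl _), hsum]
  have hL : 1 ≤ α.length := by
    rcases α with _ | ⟨a, l⟩
    · simp at hsum; omega
    · simp
  intro n hn
  rcases eq_or_lt_of_le hn with h | h
  · rw [h, ← hcL, S_c α _ (le_refl _)]
    exact hpart α.length
  · obtain ⟨k, hk, h1, h2⟩ := exists_block α hL (by rw [hcL]; exact h)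
    have hSn : S α n = A α k + (-1 : ℤ) ^ k * ((n : ℤ) - (c α k : ℤ)) := by
      rw [S_split α h1, S_c α k (le_of_lt hk)]
      congr 1
      have hc : ∑ i ∈ Finset.Ico (c α k) n, (-1 : ℤ) ^ (blk α i)
          = ∑ _i ∈ Finset.Ico (c α k) n, (-1 : ℤ) ^ k :=
        Finset.sum_congr rfl (fun i hi => by
          rw [Finset.mem_Ico] at hi
          rw [blk_eq α hk hi.1 (lt_of_lt_of_le hi.2 (le_of_lt h2))])
      rw [hc, Finset.sum_const, Nat.card_Ico, nsmul_eq_mul]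
      push_cast [Nat.cast_sub h1]
      ring
    have hAk : |A α k| ≤ (δ : ℤ) := hpart k
    have hAk1 : |A α (k + 1)| ≤ (δ : ℤ) := hpart (k + 1)
    have hArec : A α (k + 1) = A α k + (-1 : ℤ) ^ k * (α.getD k 0 : ℤ) := by
      unfold A; rw [Finset.sum_range_succ]
    have hd : (n : ℤ) - (c α k : ℤ) ≤ (α.getD k 0 : ℤ) := by
      have := c_succ α hk
      omega
    have hd0 : 0 ≤ (n : ℤ) - (c α k : ℤ) := by omega
    rcases Nat.even_or_odd k with he | ho
    · rw [he.neg_one_pow] at hSn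
      rw [he.neg_one_pow] at hArec
      rw [abs_le] at *
      constructor <;> omega
    · rw [ho.neg_one_pow] at hSn
      rw [ho.neg_one_pow] at hArec
      rw [abs_le] at *
      constructor <;> omega

end DevAux

open DevAux in
/-- For strictly decreasing nonnegative reals `x 0 > x 1 > ⋯ > x (m-1) ≥ 0` and a
`δ`-deviation set `α` of size `m`, the alternating block sum `Δ(X,α)` is at most `δ·x 0`. -/
theorem alternating_block_sum_le (m δ : ℕ) (hm : 1 ≤ m) (hδ : 1 ≤ δ)
    (x : ℕ → ℝ) (hnonneg : ∀ i, i < m → 0 ≤ x i)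
    (hdec : ∀ i j, i < j → j < m → x j < x i)
    (α : List ℕ) (hα : IsDevSet m δ α) :
    |∑ k ∈ Finset.range α.length, (-1 : ℝ) ^ k *
        ∑ i ∈ Finset.Ico ((α.take k).sum) ((α.take (k + 1)).sum), x i| ≤ δ * x 0 := by
  have hcL : c α α.length = m := by
    unfold c; rw [List.take_of_length_le (le_refl _), hα.2.1]
  -- Step 1: rewrite as a single signed sum
  have step1 : ∑ k ∈ Finset.range α.length, (-1 : ℝ) ^ k *
        ∑ i ∈ Finset.Ico ((α.take k).sum) ((α.take (k + 1)).sum), x i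
      = ∑ i ∈ Finset.range m, (-1 : ℝ) ^ (blk α i) * x i := by
    have key : ∀ t, t ≤ α.length →
        ∑ k ∈ Finset.range t, (-1 : ℝ) ^ k *
          ∑ i ∈ Finset.Ico (c α k) (c α (k + 1)), x i
        = ∑ i ∈ Finset.range (c α t), (-1 : ℝ) ^ (blk α i) * x i := by
      intro t
      induction t with
      | zero => intro _; simp [c]
      | succ t ih =>
        intro ht
        have ht' : t < α.length := by omega
        rw [Finset.sum_range_succ, ih (by omega)]
        have : (-1 : ℝ) ^ t * ∑ i ∈ Finset.Ico (c α t) (c α (t + 1)), x i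
            = ∑ i ∈ Finset.Ico (c α t) (c α (t + 1)), (-1 : ℝ) ^ (blk α i) * x i := by
          rw [Finset.mul_sum]
          refine Finset.sum_congr rfl (fun i hi => ?_)
          rw [Finset.mem_Ico] at hi
          rw [blk_eq α ht' hi.1 hi.2]
        rw [this, Finset.range_eq_Ico, Finset.range_eq_Ico]
        exact Finset.sum_Ico_consecutive (fun i => (-1 : ℝ) ^ (blk α i) * x i) (Nat.zero_le _) (c_mono α (Nat.le_succ t))
    have := key α.length (le_refl _)
    rw [hcL] at this
    exact this
  rw [step1]
  -- real partial sums of signs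
  set g : ℕ → ℝ := fun i => (-1 : ℝ) ^ (blk α i) with hg
  have hSr : ∀ n, ∑ i ∈ Finset.range n, g i = ((S α n : ℤ) : ℝ) := by
    intro n
    unfold S
    push_cast
    rfl
  have hSb : ∀ n, n ≤ m → |∑ i ∈ Finset.range n, g i| ≤ (δ : ℝ) := by
    intro n hn
    rw [hSr]
    rw [← Int.cast_abs]
    exact_mod_cast S_bound m δ α hα hm n hn
  -- Abel summation
  have habel : ∑ i ∈ Finset.range m, g i * x i
      = x (m - 1) * ∑ i ∈ Finset.range m, g i -
        ∑ i ∈ Finset.range (m - 1), (x (i + 1) - x i) * ∑ j ∈ Finset.range (i + 1), g j := by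
    have := Finset.sum_range_by_parts x g m
    simp only [smul_eq_mul] at this
    rw [← this]
    exact Finset.sum_congr rfl (fun i _ => mul_comm _ _)
  have hcomm : ∑ i ∈ Finset.range m, (-1 : ℝ) ^ (blk α i) * x i
      = ∑ i ∈ Finset.range m, g i * x i := rfl
  rw [hcomm, habel]
  have hb1 : |x (m - 1) * ∑ i ∈ Finset.range m, g i| ≤ x (m - 1) * δ := by
    rw [abs_mul, abs_of_nonneg (hnonneg (m - 1) (by omega))]
    exact mul_le_mul_of_nonneg_left (hSb m (le_refl _)) (hnonneg (m - 1) (by omega))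
  have hb2 : |∑ i ∈ Finset.range (m - 1), (x (i + 1) - x i) * ∑ j ∈ Finset.range (i + 1), g j|
      ≤ ∑ i ∈ Finset.range (m - 1), (x i - x (i + 1)) * δ := by
    refine le_trans (Finset.abs_sum_le_sum_abs _ _) (Finset.sum_le_sum fun i hi => ?_)
    rw [Finset.mem_range] at hi
    rw [abs_mul, abs_sub_comm, abs_of_nonneg
      (by linarith [hdec i (i + 1) (by omega) (by omega)] : (0:ℝ) ≤ x i - x (i + 1))]
    exact mul_le_mul_of_nonneg_left (hSb (i + 1) (by omega))
      (by linarith [hdec i (i + 1) (by omega) (by omega)])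
  have htel : ∑ i ∈ Finset.range (m - 1), (x i - x (i + 1)) * δ
      = (x 0 - x (m - 1)) * δ := by
    rw [← Finset.sum_mul, Finset.sum_range_sub' x (m - 1)]
  calc |x (m - 1) * ∑ i ∈ Finset.range m, g i -
        ∑ i ∈ Finset.range (m - 1), (x (i + 1) - x i) * ∑ j ∈ Finset.range (i + 1), g j|
      ≤ |x (m - 1) * ∑ i ∈ Finset.range m, g i| +
        |∑ i ∈ Finset.range (m - 1), (x (i + 1) - x i) * ∑ j ∈ Finset.range (i + 1), g j| :=
        abs_sub _ _
    _ ≤ x (m - 1) * δ + (x 0 - x (m - 1)) * δ := by rw [← htel]; exact add_le_add hb1 hb2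
    _ = δ * x 0 := by ring
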